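/- Let f_1,...,f_N be Boolean functions on {0,1}^n with N ≥ 1, and let Z ⊆ {0,1}^n be the set of assignments a such that min(|{i : f_i(a)=0}|, |{i : f_i(a)=1}|) < N/n^k. Fix t ≥ 1 with C(t, ⌈t/2⌉) · (1/n^k)^{t/2} < 1/2^n (for instance t = 3n/(k log n) when 1 ≤ k ≤ n, n large). Then there exist indices i_1,...,i_t ∈ {1,...,N} such that the function Maj(f_{i_1},...,f_{i_t}) agrees with Maj(f_1,...,f_N) on every assignment a ∈ Z. -/

import Mathlib

open Finset

set_option maxHeartbeats 1600000
lemma count_funcs {t N : ℕ} (M : Finset (Fin N)) (c : ℕ) :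
    (univ.filter (fun g : Fin t → Fin N =>
        c ≤ (univ.filter (fun j => g j ∈ M)).card)).card
      ≤ t.choose c * (M.card ^ c * N ^ (t - c)) := by
  classical
  calc (univ.filter (fun g : Fin t → Fin N =>
        c ≤ (univ.filter (fun j => g j ∈ M)).card)).card
      ≤ ((univ.powersetCard c).biUnion
          (fun S => univ.filter (fun g : Fin t → Fin N => ∀ j ∈ S, g j ∈ M))).card := by
        apply card_le_card
        intro g hg
        simp only [mem_filter, mem_univ, true_and] at hg
        obtain ⟨S, hS, hScard⟩ := Finset.exists_subset_card_eq hg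
        rw [mem_biUnion]
        refine ⟨S, by simp [mem_powersetCard, hScard], ?_⟩
        simp only [mem_filter, mem_univ, true_and]
        intro j hj
        have := hS hj
        simp only [mem_filter, mem_univ, true_and] at this
        exact this
    _ ≤ ∑ S ∈ univ.powersetCard c,
        (univ.filter (fun g : Fin t → Fin N => ∀ j ∈ S, g j ∈ M)).card :=
          card_biUnion_le
    _ ≤ ∑ _S ∈ univ.powersetCard c, M.card ^ c * N ^ (t - c) := by
        apply Finset.sum_le_sum
        intro S hS
        rw [mem_powersetCard] at hS
        have hEq : univ.filter (fun g : Fin t → Fin N => ∀ j ∈ S, g j ∈ M)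
            = Fintype.piFinset (fun j => if j ∈ S then M else univ) := by
          ext g
          simp only [mem_filter, mem_univ, true_and, Fintype.mem_piFinset]
          constructor
          · intro h j; split <;> simp_all
          · intro h j hj; have := h j; simp_all
        rw [hEq, Fintype.card_piFinset]
        have : ∀ j : Fin t, (if j ∈ S then M else univ).card
            = if j ∈ S then M.card else N := by
          intro j; split <;> simp
        simp only [this]
        rw [← Finset.prod_filter_mul_prod_filter_not univ (· ∈ S)]
        have h1 : univ.filter (· ∈ S) = S := by simp
        have h2 : (univ.filter (¬ · ∈ S)).card = t - c := by
          rw [Finset.filter_not, h1, card_sdiff_of_subset (subset_univ S), card_univ,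
            Fintype.card_fin, hS.2]
        rw [Finset.prod_congr h1 (fun j hj => if_pos hj),
          Finset.prod_congr rfl (fun j hj => if_neg (by simpa using (mem_filter.mp hj).2)),
          Finset.prod_const, Finset.prod_const, hS.2, h2]
    _ = t.choose c * (M.card ^ c * N ^ (t - c)) := by
        rw [Finset.sum_const, card_powersetCard, card_univ, Fintype.card_fin, smul_eq_mul]


/-- Let `f_1, ..., f_N` be Boolean functions on `{0,1}^n` (`N ≥ 1`), and let `Z` be
the set of assignments `a` such that `min(#{i : f_i a = 0}, #{i : f_i a = 1}) < N/n^k`.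
Fix `t ≥ 1` with `C(t, ⌈t/2⌉) · (1/n^k)^(t/2) < 1/2^n`.  Then there exist indices
`i_1, ..., i_t` (a function `g : Fin t → Fin N`, repetitions allowed) such that
`Maj(f_{i_1}, ..., f_{i_t})` agrees with `Maj(f_1, ..., f_N)` on every `a ∈ Z`
(majority of a list of Booleans is 1 iff at least half are 1). -/
theorem stmt17 {n N k t : ℕ} (hN : 1 ≤ N) (ht : 1 ≤ t) (hn : 1 ≤ n)
    (f : Fin N → (Fin n → Bool) → Bool)
    (hprob : (Nat.choose t ((t + 1) / 2) : ℝ) *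
        ((1 / (n : ℝ) ^ k) ^ ((t : ℝ) / 2)) < 1 / 2 ^ n) :
    ∃ g : Fin t → Fin N,
      ∀ a : Fin n → Bool,
        (min ((Finset.univ.filter (fun i => f i a = false)).card : ℝ)
             ((Finset.univ.filter (fun i => f i a = true)).card : ℝ)
          < (N : ℝ) / (n : ℝ) ^ k) →
        ((t ≤ 2 * (Finset.univ.filter (fun j : Fin t => f (g j) a = true)).card) ↔
         (N ≤ 2 * (Finset.univ.filter (fun i : Fin N => f i a = true)).card)) := by
  classical
  set c : ℕ := (t + 1) / 2 with hcdef
  have hct : c ≤ t := by omega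
  -- Z condition and bad sets
  set Zc : (Fin n → Bool) → Prop := fun a =>
    min ((Finset.univ.filter (fun i => f i a = false)).card : ℝ)
        ((Finset.univ.filter (fun i => f i a = true)).card : ℝ)
      < (N : ℝ) / (n : ℝ) ^ k with hZc
  set Bad : (Fin n → Bool) → Finset (Fin t → Fin N) := fun a =>
    univ.filter (fun g => Zc a ∧
      ¬ ((t ≤ 2 * (Finset.univ.filter (fun j : Fin t => f (g j) a = true)).card) ↔
         (N ≤ 2 * (Finset.univ.filter (fun i : Fin N => f i a = true)).card))) with hBad
  have hNpos : (0:ℝ) < (N:ℝ) := by exact_mod_cast hN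
  have hNtpos : (0:ℝ) < (N:ℝ) ^ t := pow_pos hNpos t
  have h2npos : (0:ℝ) < (2:ℝ) ^ n := by positivity
  -- per-point bound
  have key : ∀ a : Fin n → Bool, ((Bad a).card : ℝ) < (N:ℝ) ^ t / 2 ^ n := by
    intro a
    by_cases hZ : Zc a
    · -- set up counts
      set T := (Finset.univ.filter (fun i : Fin N => f i a = true)).card with hT
      set F := (Finset.univ.filter (fun i : Fin N => f i a = false)).card with hF
      have hTF : T + F = N := by
        have h2 : (univ.filter (fun i : Fin N => ¬ f i a = true))
            = univ.filter (fun i => f i a = false) := by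
          simp [Bool.not_eq_true]
        have h3 := Finset.card_filter_add_card_filter_not
          (s := (univ : Finset (Fin N))) (p := fun i => f i a = true)
        rw [h2, card_univ, Fintype.card_fin] at h3
        exact h3
      set b : Bool := if N ≤ 2 * T then false else true with hb
      set M : Finset (Fin N) := univ.filter (fun i => f i a = b) with hM
      have hm : (M.card : ℝ) < (N:ℝ) / (n:ℝ) ^ k := by
        rw [hZc] at hZ
        by_cases hQ : N ≤ 2 * T
        · have hb' : b = false := if_pos hQ
          have : M.card = F := by rw [hM, hb', hF]
          rw [this]
          have hFT : F ≤ T := by omega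
          calc (F:ℝ) = min (F:ℝ) (T:ℝ) := (min_eq_left (by exact_mod_cast hFT)).symm
            _ < _ := hZ
        · have hb' : b = true := if_neg hQ
          have : M.card = T := by rw [hM, hb', hT]
          rw [this]
          have hTF' : T ≤ F := by omega
          calc (T:ℝ) = min (F:ℝ) (T:ℝ) := (min_eq_right (by exact_mod_cast hTF')).symm
            _ < _ := hZ
      have hmN : M.card ≤ N := by
        calc M.card ≤ (univ : Finset (Fin N)).card := card_le_card (filter_subset _ _)
          _ = N := by rw [card_univ, Fintype.card_fin]
      -- Bad a is inside the counted set
      have hsub : Bad a ⊆ univ.filter (fun g : Fin t → Fin N =>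
          c ≤ (univ.filter (fun j => g j ∈ M)).card) := by
        intro g hg
        rw [hBad, mem_filter] at hg
        obtain ⟨-, -, hiff⟩ := hg
        rw [mem_filter]
        refine ⟨mem_univ _, ?_⟩
        set Tg := (Finset.univ.filter (fun j : Fin t => f (g j) a = true)).card with hTg
        have hTgF : Tg + (univ.filter (fun j : Fin t => f (g j) a = false)).card = t := by
          have h2 : (univ.filter (fun j : Fin t => ¬ f (g j) a = true))
              = univ.filter (fun j => f (g j) a = false) := by
            simp [Bool.not_eq_true]
          have h3 := Finset.card_filter_add_card_filter_not
            (s := (univ : Finset (Fin t))) (p := fun j => f (g j) a = true)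
          rw [h2, card_univ, Fintype.card_fin] at h3
          exact h3
        by_cases hQ : N ≤ 2 * T
        · have hb' : b = false := if_pos hQ
          have hP : ¬ (t ≤ 2 * Tg) := by tauto
          have hMeq : univ.filter (fun j : Fin t => g j ∈ M)
              = univ.filter (fun j : Fin t => f (g j) a = false) := by
            apply Finset.filter_congr
            intro j _
            simp [hM, hb']
          rw [hMeq]
          omega
        · have hb' : b = true := if_neg hQ
          have hP : t ≤ 2 * Tg := by tauto
          have hMeq : univ.filter (fun j : Fin t => g j ∈ M)
              = univ.filter (fun j : Fin t => f (g j) a = true) := by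
            apply Finset.filter_congr
            intro j _
            simp [hM, hb']
          rw [hMeq]
          omega
      have hcard : (Bad a).card ≤ t.choose c * (M.card ^ c * N ^ (t - c)) :=
        le_trans (card_le_card hsub) (count_funcs M c)
      -- real chain
      have hChoosePos : (0:ℝ) < (t.choose c : ℝ) := by
        exact_mod_cast Nat.choose_pos hct
      set x : ℝ := (M.card : ℝ) / (N:ℝ) with hx
      have hx0 : 0 ≤ x := by rw [hx]; exact div_nonneg (Nat.cast_nonneg _) (Nat.cast_nonneg _)
      have hx1 : x ≤ 1 := by
        rw [hx, div_le_one hNpos]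
        exact_mod_cast hmN
      have hxe : x < 1 / (n:ℝ)^k := by
        rw [hx, div_lt_iff₀ hNpos, one_div, inv_mul_eq_div]
        exact hm
      have hpow : (N:ℝ)^c * (N:ℝ)^(t-c) = (N:ℝ)^t := by
        rw [← pow_add]; congr 1; omega
      have step1 : ((M.card:ℝ) ^ c * (N:ℝ) ^ (t - c)) = x ^ c * (N:ℝ) ^ t := by
        rw [hx, div_pow, ← hpow]
        rw [div_mul_eq_mul_div, eq_div_iff (pow_ne_zero _ hNpos.ne')]
        ring
      have step2 : x ^ c ≤ x ^ ((t:ℝ)/2) := by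
        rcases eq_or_lt_of_le hx0 with h0 | h0
        · rw [← h0]
          rw [Real.zero_rpow (by positivity : ((t:ℝ)/2) ≠ 0), zero_pow (by omega : c ≠ 0)]
        · rw [← Real.rpow_natCast x c]
          apply Real.rpow_le_rpow_of_exponent_ge h0 hx1
          rw [div_le_iff₀ (by norm_num : (0:ℝ) < 2)]
          exact_mod_cast (by omega : t ≤ c * 2)
      have step3 : x ^ ((t:ℝ)/2) < (1/(n:ℝ)^k) ^ ((t:ℝ)/2) :=
        Real.rpow_lt_rpow hx0 hxe (by positivity)
      calc ((Bad a).card : ℝ)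
          ≤ (t.choose c : ℝ) * ((M.card:ℝ) ^ c * (N:ℝ) ^ (t - c)) := by
            exact_mod_cast hcard
        _ = (t.choose c : ℝ) * (x ^ c) * (N:ℝ)^t := by rw [step1]; ring
        _ ≤ (t.choose c : ℝ) * (x ^ ((t:ℝ)/2)) * (N:ℝ)^t := by
            apply mul_le_mul_of_nonneg_right _ (le_of_lt hNtpos)
            exact mul_le_mul_of_nonneg_left step2 (le_of_lt hChoosePos)
        _ < (t.choose c : ℝ) * ((1/(n:ℝ)^k) ^ ((t:ℝ)/2)) * (N:ℝ)^t := by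
            apply mul_lt_mul_of_pos_right _ hNtpos
            exact mul_lt_mul_of_pos_left step3 hChoosePos
        _ < (1 / 2^n) * (N:ℝ)^t := mul_lt_mul_of_pos_right hprob hNtpos
        _ = (N:ℝ)^t / 2^n := by ring
    · have : Bad a = ∅ := by
        rw [hBad]
        apply Finset.filter_false_of_mem
        intro g _
        tauto
      rw [this]
      simp only [card_empty, Nat.cast_zero]
      positivity
  -- union bound
  have hsum : ∑ a : Fin n → Bool, ((Bad a).card : ℝ) < (N:ℝ)^t := by
    calc ∑ a : Fin n → Bool, ((Bad a).card : ℝ)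
        < ∑ _a : Fin n → Bool, ((N:ℝ)^t / 2^n) := by
          apply Finset.sum_lt_sum_of_nonempty
          · exact univ_nonempty
          · intro a _; exact key a
      _ = (N:ℝ)^t := by
          rw [Finset.sum_const, card_univ]
          have : Fintype.card (Fin n → Bool) = 2 ^ n := by
            simp [Fintype.card_fun]
          rw [this, nsmul_eq_mul]
          push_cast
          field_simp
  have hsumN : ∑ a : Fin n → Bool, (Bad a).card < N ^ t := by
    have : ((∑ a : Fin n → Bool, (Bad a).card : ℕ) : ℝ) < ((N^t : ℕ) : ℝ) := by
      push_cast
      exact hsum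
    exact_mod_cast this
  obtain ⟨g, hg⟩ : ∃ g : Fin t → Fin N, g ∉ univ.biUnion Bad := by
    by_contra h
    push_neg at h
    have hsub : (univ : Finset (Fin t → Fin N)) ⊆ univ.biUnion Bad := fun g _ => h g
    have h1 := card_le_card hsub
    have h2 := Finset.card_biUnion_le (s := (univ : Finset (Fin n → Bool))) (t := Bad)
    rw [card_univ] at h1
    have h3 : Fintype.card (Fin t → Fin N) = N ^ t := by
      simp [Fintype.card_fun]
    omega
  refine ⟨g, fun a ha => ?_⟩
  by_contra hiff
  apply hg
  rw [mem_biUnion]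
  exact ⟨a, mem_univ a, by rw [hBad, mem_filter]; exact ⟨mem_univ _, ha, hiff⟩⟩
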